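/- Let a, b ∈ Δₙ be probability vectors, C ∈ ℝ₊^{n×n} a nonnegative cost matrix, γ > 0, and K := exp(−C/γ) entrywise. Let B = diag(u) K diag(v) with u, v ∈ ℝ_{++}ⁿ be such that ‖B‖₁ = 1 (B is a probability matrix). Then every matrix B̂ ∈ Π(a,b) satisfying ‖B − B̂‖₁ ≤ 2(‖B𝟏ₙ − a‖₁ + ‖Bᵀ𝟏ₙ − b‖₁) satisfies ⟨C, B̂⟩ ≤ min_{P ∈ Π(a,b)} ⟨C, P⟩ + 2γ log n + 4(‖B𝟏ₙ − a‖₁ + ‖Bᵀ𝟏ₙ − b‖₁)‖C‖_∞. -/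
import Mathlib

open Finset

lemma xlogy_aux {t q : ℝ} (ht : 0 < t) (hq : 0 ≤ q) :
    q * Real.log t - q * Real.log q ≤ t - q := by
  rcases eq_or_lt_of_le hq with h | h
  · simp [← h, ht.le]
  · have h1 : Real.log (t / q) ≤ t / q - 1 :=
      Real.log_le_sub_one_of_pos (by positivity)
    rw [Real.log_div ht.ne' h.ne'] at h1
    have h2 : q * (Real.log t - Real.log q) ≤ q * (t / q - 1) :=
      mul_le_mul_of_nonneg_left h1 h.le
    have h3 : q * (t / q) = t := mul_div_cancel₀ t h.ne'
    nlinarith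

lemma min_mul_eq {a r : ℝ} (ha : 0 ≤ a) (hr : 0 ≤ r) :
    min 1 (r / a) * a = min a r := by
  rcases eq_or_lt_of_le ha with h | h
  · simp [← h, hr]
  · rw [min_mul_of_nonneg _ _ h.le, one_mul, div_mul_cancel₀ _ h.ne']

lemma rounding {n : ℕ} (P : Matrix (Fin n) (Fin n) ℝ) (a b r c : Fin n → ℝ)
    (hP0 : ∀ i j, 0 ≤ P i j) (hPr : ∀ i, ∑ j, P i j = a i)
    (hPc : ∀ j, ∑ i, P i j = b j)
    (hr0 : ∀ i, 0 ≤ r i) (hc0 : ∀ j, 0 ≤ c j)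
    (ha1 : ∑ i, a i = 1) (hr1 : ∑ i, r i = 1) (hc1 : ∑ j, c j = 1) :
    ∃ Q : Matrix (Fin n) (Fin n) ℝ, (∀ i j, 0 ≤ Q i j) ∧ (∀ i, ∑ j, Q i j = r i) ∧
      (∀ j, ∑ i, Q i j = c j) ∧
      ∑ i, ∑ j, |Q i j - P i j| ≤ 2 * ((∑ i, |a i - r i|) + (∑ j, |b j - c j|)) := by
  have ha0 : ∀ i, 0 ≤ a i := fun i => (hPr i) ▸ Finset.sum_nonneg fun j _ => hP0 i j
  set x : Fin n → ℝ := fun i => min 1 (r i / a i) with hx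
  have hx0 : ∀ i, 0 ≤ x i := fun i => le_min zero_le_one (div_nonneg (hr0 i) (ha0 i))
  have hx1 : ∀ i, x i ≤ 1 := fun i => min_le_left _ _
  have hxa : ∀ i, x i * a i = min (a i) (r i) := fun i => min_mul_eq (ha0 i) (hr0 i)
  set b' : Fin n → ℝ := fun j => ∑ i, x i * P i j with hb'
  have hb'0 : ∀ j, 0 ≤ b' j := fun j => Finset.sum_nonneg fun i _ =>
    mul_nonneg (hx0 i) (hP0 i j)
  have hb'b : ∀ j, b' j ≤ b j := by
    intro j
    rw [← hPc j]
    exact Finset.sum_le_sum fun i _ => by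
      nlinarith [hx1 i, hP0 i j, hx0 i]
  set y : Fin n → ℝ := fun j => min 1 (c j / b' j) with hy
  have hy0 : ∀ j, 0 ≤ y j := fun j => le_min zero_le_one (div_nonneg (hc0 j) (hb'0 j))
  have hy1 : ∀ j, y j ≤ 1 := fun j => min_le_left _ _
  have hyb : ∀ j, y j * b' j = min (b' j) (c j) := fun j => min_mul_eq (hb'0 j) (hc0 j)
  set F : Matrix (Fin n) (Fin n) ℝ := fun i j => x i * P i j * y j with hF
  have hF0 : ∀ i j, 0 ≤ F i j := fun i j =>
    mul_nonneg (mul_nonneg (hx0 i) (hP0 i j)) (hy0 j)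
  have hFP : ∀ i j, F i j ≤ P i j := by
    intro i j
    calc x i * P i j * y j ≤ 1 * P i j * 1 := by
          apply mul_le_mul (mul_le_mul (hx1 i) le_rfl (hP0 i j) zero_le_one) (hy1 j)
            (hy0 j) (by nlinarith [hP0 i j])
      _ = P i j := by ring
  -- column sums of F
  have hFc : ∀ j, ∑ i, F i j = min (b' j) (c j) := by
    intro j
    calc ∑ i, F i j = (∑ i, x i * P i j) * y j := (Finset.sum_mul _ _ _).symm
      _ = y j * b' j := mul_comm _ _
      _ = min (b' j) (c j) := hyb j
  -- row sums of F
  set A : Fin n → ℝ := fun i => ∑ j, F i j with hA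
  have hA0 : ∀ i, 0 ≤ A i := fun i => Finset.sum_nonneg fun j _ => hF0 i j
  have hAr : ∀ i, A i ≤ r i := by
    intro i
    have h1 : A i ≤ ∑ j, x i * P i j := Finset.sum_le_sum fun j _ => by
      show x i * P i j * y j ≤ x i * P i j
      nlinarith [mul_nonneg (hx0 i) (hP0 i j), hy1 j, hy0 j]
    have h2 : ∑ j, x i * P i j = x i * a i := by rw [← Finset.mul_sum, hPr i]
    calc A i ≤ x i * a i := h2 ▸ h1
      _ = min (a i) (r i) := hxa i
      _ ≤ r i := min_le_right _ _
  set er : Fin n → ℝ := fun i => r i - A i with her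
  set ec : Fin n → ℝ := fun j => c j - min (b' j) (c j) with hec
  have her0 : ∀ i, 0 ≤ er i := fun i => by simp [her]; exact hAr i
  have hec0 : ∀ j, 0 ≤ ec j := fun j => by simp [hec]
  set T : ℝ := ∑ i, ∑ j, F i j with hT
  have hTc : T = ∑ j, min (b' j) (c j) := by
    rw [hT, Finset.sum_comm]
    exact Finset.sum_congr rfl fun j _ => hFc j
  set s : ℝ := 1 - T with hs
  have hser : ∑ i, er i = s := by
    simp only [her, Finset.sum_sub_distrib, hr1, hs, hT, hA]
  have hsec : ∑ j, ec j = s := by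
    simp only [hec, Finset.sum_sub_distrib, hc1, hs, hTc]
  have hs0 : 0 ≤ s := hser ▸ Finset.sum_nonneg fun i _ => her0 i
  set Q : Matrix (Fin n) (Fin n) ℝ := fun i j => F i j + er i * ec j / s with hQ
  have hQ0 : ∀ i j, 0 ≤ Q i j := fun i j =>
    add_nonneg (hF0 i j) (div_nonneg (mul_nonneg (her0 i) (hec0 j)) hs0)
  -- marginals
  have herz : s = 0 → ∀ i, er i = 0 := by
    intro h0 i
    have := (Finset.sum_eq_zero_iff_of_nonneg (fun i _ => her0 i)).1 (hser.trans h0)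
    exact this i (Finset.mem_univ i)
  have hecz : s = 0 → ∀ j, ec j = 0 := by
    intro h0 j
    have := (Finset.sum_eq_zero_iff_of_nonneg (fun j _ => hec0 j)).1 (hsec.trans h0)
    exact this j (Finset.mem_univ j)
  have hQr : ∀ i, ∑ j, Q i j = r i := by
    intro i
    simp only [hQ, Finset.sum_add_distrib]
    have : ∑ j, er i * ec j / s = er i * s / s := by
      rw [← hsec, Finset.mul_sum, Finset.sum_div]
    rw [this]
    rcases eq_or_ne s 0 with h0 | h0
    · have hz := herz h0 i
      simp only [her] at hz
      simp only [hA] at hz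
      rw [h0, mul_zero, zero_div, add_zero]
      linarith
    · rw [mul_div_assoc, div_self h0, mul_one]
      simp only [her, hA]
      ring
  have hQc : ∀ j, ∑ i, Q i j = c j := by
    intro j
    simp only [hQ, Finset.sum_add_distrib]
    have : ∑ i, er i * ec j / s = s * ec j / s := by
      rw [← hser, Finset.sum_mul, Finset.sum_div]
    rw [this, hFc j]
    rcases eq_or_ne s 0 with h0 | h0
    · have hz := hecz h0 j
      simp only [hec] at hz
      rw [h0, zero_mul, zero_div, add_zero]
      linarith
    · rw [mul_comm, mul_div_assoc, div_self h0, mul_one]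
      simp only [hec]; ring
  refine ⟨Q, hQ0, hQr, hQc, ?_⟩
  -- distance bound
  have hE : ∑ i, ∑ j, er i * ec j / s = s := by
    rcases eq_or_ne s 0 with h0 | h0
    · rw [h0]; apply Finset.sum_eq_zero; intro i _
      apply Finset.sum_eq_zero; intro j _
      rw [herz h0 i]; ring
    · have : ∀ i, ∑ j, er i * ec j / s = er i * s / s := by
        intro i; rw [← hsec, Finset.mul_sum, Finset.sum_div]
      rw [Finset.sum_congr rfl fun i _ => this i]
      rw [← Finset.sum_div, ← Finset.sum_mul, hser, mul_div_assoc, div_self h0, mul_one]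
  have step1 : ∑ i, ∑ j, |Q i j - P i j| ≤ 2 * s := by
    have hpt : ∀ i j, |Q i j - P i j| ≤ (P i j - F i j) + er i * ec j / s := by
      intro i j
      have h1 : Q i j - P i j = (F i j - P i j) + er i * ec j / s := by simp [hQ]; ring
      rw [h1]
      calc |(F i j - P i j) + er i * ec j / s| ≤ |F i j - P i j| + |er i * ec j / s| :=
            abs_add_le _ _
        _ = (P i j - F i j) + er i * ec j / s := by
            rw [abs_of_nonpos (by linarith [hFP i j]),
              abs_of_nonneg (div_nonneg (mul_nonneg (her0 i) (hec0 j)) hs0)]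
            ring
    calc ∑ i, ∑ j, |Q i j - P i j|
        ≤ ∑ i, ∑ j, ((P i j - F i j) + er i * ec j / s) :=
          Finset.sum_le_sum fun i _ => Finset.sum_le_sum fun j _ => hpt i j
      _ = (1 - T) + s := by
          simp only [Finset.sum_add_distrib, Finset.sum_sub_distrib]
          have hP1 : ∑ i, ∑ j, P i j = 1 := by
            rw [Finset.sum_congr rfl fun i _ => hPr i, ha1]
          rw [hP1, hE, ← hT]
      _ = 2 * s := by rw [← hs]; ring
  have step2 : s ≤ (∑ i, |a i - r i|) + (∑ j, |b j - c j|) := by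
    have e1 : s = (1 - ∑ j, b' j) + (∑ j, (b' j - min (b' j) (c j))) := by
      rw [hs, hTc, Finset.sum_sub_distrib]; ring
    have e2 : 1 - ∑ j, b' j = ∑ i, (a i - min (a i) (r i)) := by
      have : ∑ j, b' j = ∑ i, min (a i) (r i) := by
        rw [hb', Finset.sum_comm]
        exact Finset.sum_congr rfl fun i _ => by
          rw [← Finset.mul_sum, hPr i, hxa i]
      rw [this, Finset.sum_sub_distrib, ha1]
    have t1 : ∑ i, (a i - min (a i) (r i)) ≤ ∑ i, |a i - r i| := by
      apply Finset.sum_le_sum; intro i _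
      rcases le_total (a i) (r i) with h | h
      · rw [min_eq_left h, sub_self]; positivity
      · rw [min_eq_right h, abs_of_nonneg (by linarith)]
    have t2 : ∑ j, (b' j - min (b' j) (c j)) ≤ ∑ j, |b j - c j| := by
      apply Finset.sum_le_sum; intro j _
      rcases le_total (b' j) (c j) with h | h
      · rw [min_eq_left h, sub_self]; positivity
      · rw [min_eq_right h]
        have := hb'b j
        rw [abs_of_nonneg]
        · linarith
        · linarith [hc0 j]
    linarith [e1, e2 ▸ t1]
  calc ∑ i, ∑ j, |Q i j - P i j| ≤ 2 * s := step1
    _ ≤ 2 * ((∑ i, |a i - r i|) + (∑ j, |b j - c j|)) := by linarith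

lemma entropic {n : ℕ} (hn : 0 < n) (C : Matrix (Fin n) (Fin n) ℝ) (γ : ℝ)
    (hγ : 0 < γ) (u v : Fin n → ℝ) (hu : ∀ i, 0 < u i) (hv : ∀ j, 0 < v j)
    (B : Matrix (Fin n) (Fin n) ℝ)
    (hB : ∀ i j, B i j = u i * Real.exp (-C i j / γ) * v j)
    (hB1 : ∑ i, ∑ j, B i j = 1)
    (Q : Matrix (Fin n) (Fin n) ℝ) (hQ0 : ∀ i j, 0 ≤ Q i j)
    (hQr : ∀ i, ∑ j, Q i j = ∑ j, B i j) (hQc : ∀ j, ∑ i, Q i j = ∑ i, B i j) :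
    ∑ i, ∑ j, C i j * B i j ≤ ∑ i, ∑ j, C i j * Q i j + 2 * γ * Real.log n := by
  have hBpos : ∀ i j, 0 < B i j := fun i j => by
    rw [hB i j]
    exact mul_pos (mul_pos (hu i) (Real.exp_pos _)) (hv j)
  have hQ1 : ∑ i, ∑ j, Q i j = 1 := by
    rw [Finset.sum_congr rfl fun i _ => hQr i, hB1]
  have hCid : ∀ i j, C i j =
      γ * (Real.log (u i) + Real.log (v j) - Real.log (B i j)) := by
    intro i j
    have h1 : Real.log (B i j) = Real.log (u i) + (-(C i j / γ)) + Real.log (v j) := by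
      rw [hB i j, Real.log_mul (mul_pos (hu i) (Real.exp_pos _)).ne' (hv j).ne',
        Real.log_mul (hu i).ne' (Real.exp_ne_zero _), Real.log_exp, neg_div]
    have h2 : Real.log (u i) + Real.log (v j) - Real.log (B i j) = C i j / γ := by
      linarith
    rw [h2]
    field_simp
  have hmb : ∀ (M : Matrix (Fin n) (Fin n) ℝ),
      ∑ i, ∑ j, C i j * M i j =
        γ * ((∑ i, Real.log (u i) * (∑ j, M i j)) +
          (∑ j, Real.log (v j) * (∑ i, M i j)) -
          ∑ i, ∑ j, Real.log (B i j) * M i j) := by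
    intro M
    have h1 : ∑ i, ∑ j, C i j * M i j =
        ∑ i, ∑ j, (γ * (Real.log (u i) * M i j) + γ * (Real.log (v j) * M i j)
          - γ * (Real.log (B i j) * M i j)) :=
      Finset.sum_congr rfl fun i _ => Finset.sum_congr rfl fun j _ => by
        rw [hCid i j]; ring
    have e1 : ∑ i, ∑ j, Real.log (u i) * M i j
        = ∑ i, Real.log (u i) * (∑ j, M i j) :=
      Finset.sum_congr rfl fun i _ => (Finset.mul_sum _ _ _).symm
    have e2 : ∑ i, ∑ j, Real.log (v j) * M i j
        = ∑ j, Real.log (v j) * (∑ i, M i j) := by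
      rw [Finset.sum_comm]
      exact Finset.sum_congr rfl fun j _ => (Finset.mul_sum _ _ _).symm
    rw [h1]
    simp only [Finset.sum_add_distrib, Finset.sum_sub_distrib, ← Finset.mul_sum]
    rw [e2]
    ring
  have diff : (∑ i, ∑ j, C i j * B i j) - (∑ i, ∑ j, C i j * Q i j) =
      γ * ((∑ i, ∑ j, Real.log (B i j) * Q i j)
        - ∑ i, ∑ j, Real.log (B i j) * B i j) := by
    rw [hmb B, hmb Q]
    have r1 : (∑ i, Real.log (u i) * (∑ j, Q i j))
        = ∑ i, Real.log (u i) * (∑ j, B i j) :=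
      Finset.sum_congr rfl fun i _ => by rw [hQr i]
    have r2 : (∑ j, Real.log (v j) * (∑ i, Q i j))
        = ∑ j, Real.log (v j) * (∑ i, B i j) :=
      Finset.sum_congr rfl fun j _ => by rw [hQc j]
    rw [r1, r2]
    ring
  -- Gibbs inequality
  have gibbs : (∑ i, ∑ j, Real.log (B i j) * Q i j)
      ≤ ∑ i, ∑ j, Q i j * Real.log (Q i j) := by
    have h : ∑ i, ∑ j, (Q i j * Real.log (B i j) - Q i j * Real.log (Q i j))
        ≤ ∑ i, ∑ j, (B i j - Q i j) :=
      Finset.sum_le_sum fun i _ => Finset.sum_le_sum fun j _ =>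
        xlogy_aux (hBpos i j) (hQ0 i j)
    simp only [Finset.sum_sub_distrib] at h
    rw [hB1, hQ1] at h
    have e : (∑ i, ∑ j, Real.log (B i j) * Q i j)
        = ∑ i, ∑ j, Q i j * Real.log (B i j) :=
      Finset.sum_congr rfl fun i _ => Finset.sum_congr rfl fun j _ => mul_comm _ _
    rw [e]
    linarith
  -- entropy of Q is nonpositive
  have hQle1 : ∀ i j, Q i j ≤ 1 := by
    intro i j
    calc Q i j ≤ ∑ j', Q i j' :=
          Finset.single_le_sum (fun j' _ => hQ0 i j') (Finset.mem_univ j)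
      _ ≤ ∑ i', ∑ j', Q i' j' :=
          Finset.single_le_sum
            (fun i' _ => Finset.sum_nonneg fun j' _ => hQ0 i' j')
            (Finset.mem_univ i)
      _ = 1 := hQ1
  have ent1 : ∑ i, ∑ j, Q i j * Real.log (Q i j) ≤ 0 :=
    Finset.sum_nonpos fun i _ => Finset.sum_nonpos fun j _ =>
      mul_nonpos_of_nonneg_of_nonpos (hQ0 i j)
        (Real.log_nonpos (hQ0 i j) (hQle1 i j))
  -- entropy of B is at most 2 log n
  have ent2 : -(∑ i, ∑ j, Real.log (B i j) * B i j) ≤ 2 * Real.log n := by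
    have hnR : (0:ℝ) < (n:ℝ) := by exact_mod_cast hn
    have ht : (0:ℝ) < ((n:ℝ) * n)⁻¹ := by positivity
    have h : ∑ i, ∑ j, (B i j * Real.log (((n:ℝ) * n)⁻¹) - B i j * Real.log (B i j))
        ≤ ∑ i : Fin n, ∑ j : Fin n, (((n:ℝ) * n)⁻¹ - B i j) :=
      Finset.sum_le_sum fun i _ => Finset.sum_le_sum fun j _ =>
        xlogy_aux ht (hBpos i j).le
    simp only [Finset.sum_sub_distrib] at h
    rw [hB1] at h
    have e1 : ∑ i : Fin n, ∑ j : Fin n, B i j * Real.log (((n:ℝ) * n)⁻¹)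
        = Real.log (((n:ℝ) * n)⁻¹) := by
      simp only [← Finset.sum_mul]
      rw [hB1, one_mul]
    have e2 : ∑ i : Fin n, ∑ j : Fin n, (((n:ℝ) * n)⁻¹ : ℝ) = 1 := by
      simp [Finset.sum_const, Finset.card_univ]
      field_simp
    rw [e1, e2] at h
    have e3 : Real.log (((n:ℝ) * n)⁻¹) = -(2 * Real.log n) := by
      rw [Real.log_inv, Real.log_mul hnR.ne' hnR.ne']
      ring
    rw [e3] at h
    have e4 : (∑ i, ∑ j, B i j * Real.log (B i j))
        = ∑ i, ∑ j, Real.log (B i j) * B i j :=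
      Finset.sum_congr rfl fun i _ => Finset.sum_congr rfl fun j _ => mul_comm _ _
    rw [e4] at h
    linarith
  have key : (∑ i, ∑ j, Real.log (B i j) * Q i j)
      - (∑ i, ∑ j, Real.log (B i j) * B i j) ≤ 2 * Real.log n := by
    linarith
  have final : (∑ i, ∑ j, C i j * B i j) - (∑ i, ∑ j, C i j * Q i j)
      ≤ γ * (2 * Real.log n) := by
    rw [diff]
    exact mul_le_mul_of_nonneg_left key hγ.le
  linarith


/-- **Approximation bound after rounding** (Theorem 1 of Altschuler–Weed–Rigollet).
Let `a, b` be probability vectors, `C ≥ 0` a cost matrix, `γ > 0`,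
`K = exp(−C/γ)` entrywise, and `B = diag(u) K diag(v)` a probability matrix
(`u, v > 0`, `‖B‖₁ = 1`).  Then any `B̂ ∈ Π(a,b)` with
`‖B − B̂‖₁ ≤ 2(‖B𝟏 − a‖₁ + ‖Bᵀ𝟏 − b‖₁)` satisfies
`⟨C,B̂⟩ ≤ min_{P ∈ Π(a,b)} ⟨C,P⟩ + 2γ log n + 4(‖B𝟏 − a‖₁ + ‖Bᵀ𝟏 − b‖₁)‖C‖_∞`. -/
theorem rounded_plan_cost_bound {n : ℕ} (a b : Fin n → ℝ)
    (C : Matrix (Fin n) (Fin n) ℝ) (γ : ℝ) (hγ : 0 < γ)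
    (ha0 : ∀ i, 0 ≤ a i) (hb0 : ∀ j, 0 ≤ b j)
    (ha1 : ∑ i, a i = 1) (hb1 : ∑ j, b j = 1)
    (hC : ∀ i j, 0 ≤ C i j)
    (u v : Fin n → ℝ) (hu : ∀ i, 0 < u i) (hv : ∀ j, 0 < v j)
    (B : Matrix (Fin n) (Fin n) ℝ)
    (hB : ∀ i j, B i j = u i * Real.exp (-C i j / γ) * v j)
    (hBsum : ∑ i, ∑ j, |B i j| = 1)
    (Bhat : Matrix (Fin n) (Fin n) ℝ)
    (hBhat0 : ∀ i j, 0 ≤ Bhat i j)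
    (hBhatr : ∀ i, ∑ j, Bhat i j = a i)
    (hBhatc : ∀ j, ∑ i, Bhat i j = b j)
    (hclose : ∑ i, ∑ j, |B i j - Bhat i j| ≤
      2 * ((∑ i, |(∑ j, B i j) - a i|) + (∑ j, |(∑ i, B i j) - b j|))) :
    ∀ P : Matrix (Fin n) (Fin n) ℝ,
      (∀ i j, 0 ≤ P i j) → (∀ i, ∑ j, P i j = a i) → (∀ j, ∑ i, P i j = b j) →
      ∑ i, ∑ j, C i j * Bhat i j ≤
        (∑ i, ∑ j, C i j * P i j) + 2 * γ * Real.log n +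
          4 * ((∑ i, |(∑ j, B i j) - a i|) + (∑ j, |(∑ i, B i j) - b j|)) *
            (⨆ i, ⨆ j, |C i j|) := by
  intro P hP0 hPr hPc
  rcases Nat.eq_zero_or_pos n with hn | hn
  · subst hn
    simp
  · have hBpos : ∀ i j, 0 < B i j := fun i j => by
      rw [hB i j]
      exact mul_pos (mul_pos (hu i) (Real.exp_pos _)) (hv j)
    have hB1 : ∑ i, ∑ j, B i j = 1 := by
      rw [← hBsum]
      exact Finset.sum_congr rfl fun i _ => Finset.sum_congr rfl fun j _ =>
        (abs_of_pos (hBpos i j)).symm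
    have hr0 : ∀ i, 0 ≤ ∑ j, B i j := fun i =>
      Finset.sum_nonneg fun j _ => (hBpos i j).le
    have hc0 : ∀ j, 0 ≤ ∑ i, B i j := fun j =>
      Finset.sum_nonneg fun i _ => (hBpos i j).le
    have hc1 : ∑ j, ∑ i, B i j = 1 := by rw [Finset.sum_comm]; exact hB1
    obtain ⟨Q, hQ0, hQr, hQc, hQP⟩ :=
      rounding P a b (fun i => ∑ j, B i j) (fun j => ∑ i, B i j)
        hP0 hPr hPc hr0 hc0 ha1 hB1 hc1
    have hent : ∑ i, ∑ j, C i j * B i j ≤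
        ∑ i, ∑ j, C i j * Q i j + 2 * γ * Real.log n :=
      entropic hn C γ hγ u v hu hv B hB hB1 Q hQ0 hQr hQc
    -- sup-norm bound
    haveI : Nonempty (Fin n) := ⟨⟨0, hn⟩⟩
    have hSb : ∀ i j, |C i j| ≤ ⨆ i, ⨆ j, |C i j| := by
      intro i j
      calc |C i j| ≤ ⨆ j', |C i j'| :=
            le_ciSup (f := fun j => |C i j|)
              (Set.Finite.bddAbove (Set.finite_range _)) j
        _ ≤ ⨆ i, ⨆ j, |C i j| :=
            le_ciSup (f := fun i => ⨆ j, |C i j|)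
              (Set.Finite.bddAbove (Set.finite_range _)) i
    have hS0 : 0 ≤ ⨆ i, ⨆ j, |C i j| :=
      le_trans (abs_nonneg _) (hSb ⟨0, hn⟩ ⟨0, hn⟩)
    set S := ⨆ i, ⨆ j, |C i j| with hS
    have lip : ∀ X Y : Matrix (Fin n) (Fin n) ℝ,
        (∑ i, ∑ j, C i j * X i j) - (∑ i, ∑ j, C i j * Y i j) ≤
          (∑ i, ∑ j, |X i j - Y i j|) * S := by
      intro X Y
      have h1 : (∑ i, ∑ j, C i j * X i j) - (∑ i, ∑ j, C i j * Y i j) =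
          ∑ i, ∑ j, C i j * (X i j - Y i j) := by
        rw [← Finset.sum_sub_distrib]
        exact Finset.sum_congr rfl fun i _ => by
          rw [← Finset.sum_sub_distrib]
          exact Finset.sum_congr rfl fun j _ => (mul_sub _ _ _).symm
      rw [h1, Finset.sum_mul]
      apply Finset.sum_le_sum; intro i _
      rw [Finset.sum_mul]
      apply Finset.sum_le_sum; intro j _
      calc C i j * (X i j - Y i j) ≤ |C i j * (X i j - Y i j)| := le_abs_self _
        _ = |C i j| * |X i j - Y i j| := abs_mul _ _
        _ ≤ S * |X i j - Y i j| :=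
            mul_le_mul_of_nonneg_right (hSb i j) (abs_nonneg _)
        _ = |X i j - Y i j| * S := mul_comm _ _
    -- the error quantity
    set ρ : ℝ := (∑ i, |(∑ j, B i j) - a i|) + (∑ j, |(∑ i, B i j) - b j|) with hρ
    have hQP' : ∑ i, ∑ j, |Q i j - P i j| ≤ 2 * ρ := by
      refine hQP.trans (le_of_eq ?_)
      rw [hρ]
      congr 1
      congr 1
      · exact Finset.sum_congr rfl fun i _ => abs_sub_comm _ _
      · exact Finset.sum_congr rfl fun j _ => abs_sub_comm _ _
    have h1 : (∑ i, ∑ j, C i j * Bhat i j) - (∑ i, ∑ j, C i j * B i j) ≤ 2 * ρ * S := by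
      have := lip Bhat B
      have habs : ∑ i, ∑ j, |Bhat i j - B i j| = ∑ i, ∑ j, |B i j - Bhat i j| :=
        Finset.sum_congr rfl fun i _ => Finset.sum_congr rfl fun j _ => abs_sub_comm _ _
      rw [habs] at this
      calc (∑ i, ∑ j, C i j * Bhat i j) - (∑ i, ∑ j, C i j * B i j)
          ≤ (∑ i, ∑ j, |B i j - Bhat i j|) * S := this
        _ ≤ 2 * ρ * S := mul_le_mul_of_nonneg_right hclose hS0
    have h2 : (∑ i, ∑ j, C i j * Q i j) - (∑ i, ∑ j, C i j * P i j) ≤ 2 * ρ * S :=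
      (lip Q P).trans (mul_le_mul_of_nonneg_right hQP' hS0)
    have hgoal : 4 * ρ * S = 2 * ρ * S + 2 * ρ * S := by ring
    linarith
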